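/- Let n ≥ 1 and let M be a ℂ-linear endomorphism of H = ((Fin n → Bool) → ℂ). If M commutes with every bit-flip operator X_j ((X_j f)(x) = f(x with j-th bit flipped)) and with every sign operator Z_j ((Z_j f)(x) = (−1)^{x_j} f(x)), for all j, then M is a scalar multiple of the identity. -/

import Mathlib

/-- The bit-flip (Pauli `X`) operator on the `j`-th qubit,
`(X_j f)(x) = f(x with the j-th bit flipped)`. -/
noncomputable def XopL {n : ℕ} (j : Fin n) :
    ((Fin n → Bool) → ℂ) →ₗ[ℂ] ((Fin n → Bool) → ℂ) where
  toFun f := fun x => f (Function.update x j (!(x j)))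
  map_add' f f' := rfl
  map_smul' c f := rfl

/-- The sign (Pauli `Z`) operator on the `j`-th qubit, `(Z_j f)(x) = (−1)^{x_j}·f(x)`. -/
noncomputable def ZopL {n : ℕ} (j : Fin n) :
    ((Fin n → Bool) → ℂ) →ₗ[ℂ] ((Fin n → Bool) → ℂ) where
  toFun f := fun x => (-1 : ℂ) ^ (if x j then 1 else 0 : ℕ) * f x
  map_add' f f' := by funext x; simp [mul_add]
  map_smul' c f := by funext x; simp; try ring

noncomputable def deltaP {n : ℕ} (x : Fin n → Bool) : (Fin n → Bool) → ℂ :=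
  Pi.single x 1

lemma Z_delta {n : ℕ} (j : Fin n) (x : Fin n → Bool) :
    ZopL j (deltaP x) = ((-1 : ℂ) ^ (if x j then 1 else 0 : ℕ)) • deltaP x := by
  funext z
  by_cases h : z = x
  · subst h; simp [ZopL, deltaP]
  · simp [ZopL, deltaP, Pi.single_apply, h]

lemma update_flip_flip {n : ℕ} (j : Fin n) (x : Fin n → Bool) :
    Function.update (Function.update x j (!(x j))) j
      (!(Function.update x j (!(x j)) j)) = x := by
  simp [Function.update_idem]

lemma X_delta {n : ℕ} (j : Fin n) (x : Fin n → Bool) :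
    XopL j (deltaP x) = deltaP (Function.update x j (!(x j))) := by
  funext z
  have hiff : Function.update z j (!(z j)) = x ↔ z = Function.update x j (!(x j)) := by
    constructor
    · intro h; rw [← h]; exact (update_flip_flip j z).symm
    · intro h; rw [h]; exact update_flip_flip j x
  simp only [XopL, LinearMap.coe_mk, AddHom.coe_mk, deltaP, Pi.single_apply]
  rw [if_congr hiff rfl rfl]

/-- A linear endomorphism of `(Fin n → Bool) → ℂ` commuting with every
bit-flip operator `X_j` and every sign operator `Z_j` is a scalar multiple of the
identity. -/
theorem commutant_of_pauli_is_scalar {n : ℕ} (hn : 1 ≤ n)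
    (M : ((Fin n → Bool) → ℂ) →ₗ[ℂ] ((Fin n → Bool) → ℂ))
    (hX : ∀ j : Fin n, M ∘ₗ XopL j = XopL j ∘ₗ M)
    (hZ : ∀ j : Fin n, M ∘ₗ ZopL j = ZopL j ∘ₗ M) :
    ∃ c : ℂ, M = c • LinearMap.id := by
  classical
  -- Step 1: M is diagonal in the delta basis
  have hdiag : ∀ x : Fin n → Bool, M (deltaP x) = (M (deltaP x) x) • deltaP x := by
    intro x
    funext y
    by_cases hxy : y = x
    · subst hxy; simp [deltaP]
    · obtain ⟨j, hj⟩ : ∃ j, y j ≠ x j := by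
        by_contra h; push_neg at h; exact hxy (funext h)
      have h1 : M (ZopL j (deltaP x)) y = ZopL j (M (deltaP x)) y := by
        rw [← LinearMap.comp_apply, ← LinearMap.comp_apply, hZ j]
      rw [Z_delta] at h1
      simp only [map_smul, Pi.smul_apply, smul_eq_mul] at h1
      have h2 : (ZopL j) (M (deltaP x)) y
          = (-1 : ℂ) ^ (if y j then 1 else 0 : ℕ) * M (deltaP x) y := rfl
      rw [h2] at h1
      have hzero : M (deltaP x) y = 0 := by
        rcases Bool.eq_false_or_eq_true (x j) with hx | hx <;>
        rcases Bool.eq_false_or_eq_true (y j) with hy | hy <;>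
          simp [hx, hy] at hj h1 ⊢ <;>
          first
            | linear_combination h1 / 2
            | linear_combination -h1 / 2
      rw [hzero]
      simp [deltaP, Pi.single_apply, hxy]
  set c : (Fin n → Bool) → ℂ := fun x => M (deltaP x) x with hc
  -- Step 2: c is invariant under bit flips
  have hflip : ∀ (j : Fin n) (x : Fin n → Bool),
      c (Function.update x j (!(x j))) = c x := by
    intro j x
    have h2 : M (XopL j (deltaP x)) = XopL j (M (deltaP x)) := by
      rw [← LinearMap.comp_apply, ← LinearMap.comp_apply, hX j]
    rw [hdiag x] at h2
    rw [map_smul, X_delta] at h2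
    have := congrFun h2 (Function.update x j (!(x j)))
    simp only [Pi.smul_apply, smul_eq_mul, deltaP, Pi.single_eq_same] at this
    simpa [hc, deltaP] using this
  -- Step 3: c is constant
  have hconst : ∀ x : Fin n → Bool, c x = c (fun _ => false) := by
    have key : ∀ k : ℕ, ∀ x : Fin n → Bool,
        (Finset.univ.filter (fun j => x j = true)).card = k →
        c x = c (fun _ => false) := by
      intro k
      induction k with
      | zero =>
        intro x hx
        have hx0 : x = fun _ => false := by
          funext j
          by_contra h
          have hjt : x j = true := by
            cases hxj : x j
            · exact absurd hxj h
            · rfl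
          have : j ∈ Finset.univ.filter (fun j => x j = true) := by
            simp [hjt]
          rw [Finset.card_eq_zero] at hx
          simp [hx] at this
        rw [hx0]
      | succ k ih =>
        intro x hx
        obtain ⟨j, hj⟩ : ∃ j, x j = true := by
          by_contra h
          push_neg at h
          have : (Finset.univ.filter (fun j => x j = true)).card = 0 := by
            rw [Finset.card_eq_zero]
            ext j; simp [h j]
          omega
        set x' := Function.update x j false with hx'
        have hcx : c x = c x' := by
          have h1 := hflip j x'
          have h2 : Function.update x' j (!(x' j)) = x := by
            rw [hx']
            funext i
            by_cases hij : i = j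
            · subst hij; simp [hj]
            · simp [Function.update_of_ne hij]
          rw [h2] at h1
          exact h1
        have hcard : (Finset.univ.filter (fun i => x' i = true)).card = k := by
          have hset : Finset.univ.filter (fun i => x' i = true)
              = (Finset.univ.filter (fun i => x i = true)).erase j := by
            ext i
            by_cases hij : i = j
            · subst hij; simp [hx']
            · simp [hx', Function.update_of_ne hij, hij]
          rw [hset, Finset.card_erase_of_mem (by simp [hj]), hx]
          omega
        rw [hcx]
        exact ih x' hcard
    intro x
    exact key _ x rfl
  -- Step 4: conclude
  refine ⟨c (fun _ => false), ?_⟩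
  apply LinearMap.ext
  intro f
  have hf : f = ∑ x : Fin n → Bool, (f x) • deltaP x := by
    funext y
    rw [Finset.sum_apply, Finset.sum_eq_single y]
    · simp [deltaP]
    · intro b _ hb
      simp [deltaP, Pi.single_apply, Ne.symm hb]
    · intro h
      exact absurd (Finset.mem_univ y) h
  conv_lhs => rw [hf]
  rw [map_sum]
  have hterm : ∀ x : Fin n → Bool, M (f x • deltaP x)
      = c (fun _ => false) • (f x • deltaP x) := by
    intro x
    rw [map_smul, hdiag x, show M (deltaP x) x = c x from rfl, hconst x, smul_comm]
  rw [Finset.sum_congr rfl (fun x _ => hterm x), ← Finset.smul_sum, ← hf]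
  simp
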